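/- arXiv:1606.07489 — 2 statements merged into one kernel-verified Lean document; each statement's English description precedes it below -/
import Mathlib

section
/- Let A and B be countable structures, let F : Iso(B) → Iso(A) be a Borel functor with A = F(B), and define Dom ⊆ B* × ω by: (b̄,i) ∈ Dom iff (b̄,b̄) ⊩_{(B*)²} "F(ġ₂⁻¹∘ġ₁)(i) = i", and for (b̄,i),(c̄,j) ∈ Dom define (b̄,i) ∼ (c̄,j) iff (b̄,c̄) ⊩_{(B*)²} "F(ġ₂⁻¹∘ġ₁)(i) = j". Then ∼ is an equivalence relation on Dom. -/
namespace Paper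

/-- A structure in a (countable) relational language with arity function `L`,
with domain `ω`.  `rel i` is the interpretation of the `i`-th relation symbol,
of arity `L i`. -/
structure Str (L : ℕ → ℕ) where
  rel : ∀ i, (Fin (L i) → ℕ) → Bool

/-- `g` is an isomorphism from `M` to `N`. -/
def IsIso {L : ℕ → ℕ} (M N : Str L) (g : ℕ ≃ ℕ) : Prop :=
  ∀ i (v : Fin (L i) → ℕ), M.rel i v = N.rel i fun k => g (v k)

theorem isIso_refl {L : ℕ → ℕ} (M : Str L) : IsIso M M (Equiv.refl ℕ) := fun _ _ => rfl

/-- The automorphism group of `M`, as a subgroup of `S_∞ = Equiv.Perm ℕ`. -/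
def aut {L : ℕ → ℕ} (M : Str L) : Subgroup (Equiv.Perm ℕ) where
  carrier := {g | IsIso M M g}
  one_mem' := isIso_refl M
  mul_mem' := by
    intro a b ha hb i v
    exact (hb i v).trans (ha i fun k => b (v k))
  inv_mem' := by
    intro a ha i v
    have h := ha i fun k => a⁻¹ (v k)
    simpa using h.symm

theorem mem_aut {L : ℕ → ℕ} {M : Str L} {g : Equiv.Perm ℕ} (h : g ∈ aut M) : IsIso M M g := h

/-- The topology of pointwise convergence on `S_∞ = Equiv.Perm ℕ`, i.e. the topology
induced from Baire space `ω^ω`; automorphism groups of countable structures carry the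
subspace topology. -/
instance : TopologicalSpace (Equiv.Perm ℕ) :=
  TopologicalSpace.induced (fun g => (g : ℕ → ℕ)) inferInstance

end Paper
namespace Paper

def Isomorphic {L : ℕ → ℕ} (M N : Str L) : Prop := ∃ g : ℕ ≃ ℕ, IsIso M N g

/-- The copies of `B`: structures with domain `ω` isomorphic to `B`.  These are the
objects of the category `Iso(B)`; the morphisms are the isomorphisms between copies. -/
abbrev Copy {L : ℕ → ℕ} (B : Str L) := {M : Str L // Isomorphic M B}

def selfCopy {L : ℕ → ℕ} (B : Str L) : Copy B := ⟨B, ⟨Equiv.refl ℕ, isIso_refl B⟩⟩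

/-- A functor from `Iso(B)` to `Iso(A)`: it maps copies of `B` to copies of `A` and
isomorphisms between copies of `B` to isomorphisms between the corresponding copies
of `A`, preserving identity and composition (Definition 1.8). -/
structure IsoFunctor {LB LA : ℕ → ℕ} (B : Str LB) (A : Str LA) where
  obj : Copy B → Copy A
  map : ∀ (M N : Copy B) (g : ℕ ≃ ℕ), IsIso M.1 N.1 g → (ℕ ≃ ℕ)
  map_iso : ∀ M N g hg, IsIso (obj M).1 (obj N).1 (map M N g hg)
  map_id : ∀ (M : Copy B) (h : IsIso M.1 M.1 (Equiv.refl ℕ)),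
    map M M (Equiv.refl ℕ) h = Equiv.refl ℕ
  map_comp : ∀ (M N P : Copy B) (g₁ : ℕ ≃ ℕ) (h₁ : IsIso M.1 N.1 g₁)
    (g₂ : ℕ ≃ ℕ) (h₂ : IsIso N.1 P.1 g₂) (h₃ : IsIso M.1 P.1 (g₁.trans g₂)),
    map M P (g₁.trans g₂) h₃ = (map M N g₁ h₁).trans (map N P g₂ h₂)

/-- Codes of structures with domain `ω` as elements of Cantor space. -/
abbrev ObjCode (L : ℕ → ℕ) := (Σ i : ℕ, (Fin (L i) → ℕ)) → Bool

def codeStr {L : ℕ → ℕ} (M : Str L) : ObjCode L := fun p => M.rel p.1 p.2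

/-- A functor is Borel if its action on objects and its action on morphisms are
given by Borel operators on the codes. -/
def IsBorelFunctor {LB LA : ℕ → ℕ} {B : Str LB} {A : Str LA} (F : IsoFunctor B A) : Prop :=
  ∃ (Φ : ObjCode LB → ObjCode LA) (Ψ : ObjCode LB × (ℕ → ℕ) × ObjCode LB → (ℕ → ℕ)),
    Measurable Φ ∧ Measurable Ψ ∧
    (∀ M : Copy B, codeStr (F.obj M).1 = Φ (codeStr M.1)) ∧
    (∀ M N g hg, ⇑(F.map M N g hg) = Ψ (codeStr M.1, ⇑g, codeStr N.1))

/-- Natural isomorphism of functors `Iso(B) → Iso(A)` (Definition 1.9). -/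
def NatIso {LB LA : ℕ → ℕ} {B : Str LB} {A : Str LA} (F G : IsoFunctor B A) : Prop :=
  ∃ η : Copy B → (ℕ ≃ ℕ),
    (∀ M, IsIso (F.obj M).1 (G.obj M).1 (η M)) ∧
    (∀ (M N : Copy B) (g : ℕ ≃ ℕ) (hg : IsIso M.1 N.1 g),
      (η M).trans (G.map M N g hg) = (F.map M N g hg).trans (η N))

end Paper
namespace Paper

/-- The pullback `B_g` of `B` along a bijection `g : ω → B`. -/
def pullbackE {L : ℕ → ℕ} (B : Str L) (g : ℕ ≃ ℕ) : Str L :=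
  ⟨fun k v => B.rel k fun t => g (v t)⟩

theorem pullback_isIso {L : ℕ → ℕ} (B : Str L) (g : ℕ ≃ ℕ) :
    IsIso (pullbackE B g) B g := fun _ _ => rfl

/-- The pullback `B_g`, as a copy of `B`. -/
def copyOf {L : ℕ → ℕ} (B : Str L) (g : ℕ ≃ ℕ) : Copy B :=
  ⟨pullbackE B g, g, pullback_isIso B g⟩

/-- `g₂⁻¹ ∘ g₁` is an isomorphism from `B_{g₁}` to `B_{g₂}`. -/
theorem pullback_mor {L : ℕ → ℕ} (B : Str L) (g₁ g₂ : ℕ ≃ ℕ) :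
    IsIso (pullbackE B g₁) (pullbackE B g₂) (g₁.trans g₂.symm) := by
  intro k v
  simp [pullbackE]

end Paper
namespace Paper

/-- A condition in the product forcing `(B*)^ℓ`: an `ℓ`-tuple of finite tuples
from the domain of `B` (injectivity is the predicate `validCond`). -/
abbrev Cond (ℓ : ℕ) := Fin ℓ → List ℕ

/-- A condition is valid if each coordinate is an injective (repetition-free) tuple. -/
def validCond {ℓ : ℕ} (p : Cond ℓ) : Prop := ∀ i, (p i).Nodup

/-- `q` extends `p` as a condition in `(B*)^ℓ`. -/
def extendsCond {ℓ : ℕ} (q p : Cond ℓ) : Prop := ∀ i, p i <+: q i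

/-- The forcing language for `(B*)^ℓ`: basic formulas `ġ_i⁻¹∘ġ_j(m) = n` and its
negation, `R^{B_{ġ_i}}(a₁,…,a_k)` and its negation, `ġ_i(m) = n` and its negation,
closed under countable conjunctions and disjunctions. -/
inductive FormL (L : ℕ → ℕ) (ℓ : ℕ) : Type where
  | compEq (i j : Fin ℓ) (m n : ℕ)
  | compNe (i j : Fin ℓ) (m n : ℕ)
  | rel (i : Fin ℓ) (k : ℕ) (a : Fin (L k) → ℕ)
  | nrel (i : Fin ℓ) (k : ℕ) (a : Fin (L k) → ℕ)
  | appEq (i : Fin ℓ) (m n : ℕ)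
  | appNe (i : Fin ℓ) (m n : ℕ)
  | conj (ψ : ℕ → FormL L ℓ)
  | disj (ψ : ℕ → FormL L ℓ)

/-- The formal negation within the forcing language: it flips conjunctions and
disjunctions and negates the basic formulas. -/
def negat {L : ℕ → ℕ} {ℓ : ℕ} : FormL L ℓ → FormL L ℓ
  | .compEq i j m n => .compNe i j m n
  | .compNe i j m n => .compEq i j m n
  | .rel i k a => .nrel i k a
  | .nrel i k a => .rel i k a
  | .appEq i m n => .appNe i m n
  | .appNe i m n => .appEq i m n
  | .conj ψ => .disj fun n => negat (ψ n)
  | .disj ψ => .conj fun n => negat (ψ n)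

/-- The forcing relation `p ⊩_{(B*)^ℓ} φ` (Definition 3.3 of the paper). -/
def Forces {L : ℕ → ℕ} (B : Str L) {ℓ : ℕ} : Cond ℓ → FormL L ℓ → Prop
  | p, .compEq i j m n => ∃ x, (p i)[n]? = some x ∧ (p j)[m]? = some x
  | p, .compNe i j m n =>
      (∃ x y, (p i)[n]? = some x ∧ (p j)[m]? = some y ∧ x ≠ y) ∨
      (∃ m', m' ≠ m ∧ ∃ x, (p i)[n]? = some x ∧ (p j)[m']? = some x) ∨
      (∃ n', n' ≠ n ∧ ∃ x, (p i)[n']? = some x ∧ (p j)[m]? = some x)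
  | p, .rel i k a =>
      ∃ v : Fin (L k) → ℕ, (∀ t, (p i)[a t]? = some (v t)) ∧ B.rel k v = true
  | p, .nrel i k a =>
      ∃ v : Fin (L k) → ℕ, (∀ t, (p i)[a t]? = some (v t)) ∧ B.rel k v = false
  | p, .appEq i m n => (p i)[m]? = some n
  | p, .appNe i m n =>
      (∃ x, (p i)[m]? = some x ∧ x ≠ n) ∨ (∃ m', m' ≠ m ∧ (p i)[m']? = some n)
  | p, .conj ψ => ∀ (n : ℕ) (q : Cond ℓ), validCond q → extendsCond q p →
      ∃ r : Cond ℓ, validCond r ∧ extendsCond r q ∧ Forces B r (ψ n)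
  | p, .disj ψ => ∃ n : ℕ, Forces B p (ψ n)

end Paper
namespace Paper

/-- `φ[g]` holds: the truth of a sentence of the forcing language under the natural
interpretation which substitutes `g i` for `ġ_i` (so `ġ_i⁻¹∘ġ_j(m) = n` becomes
`g_i(n) = g_j(m)`, and `R^{B_{ġ_i}}(ā)` is read in the pullback `B_{g_i}`). -/
def Holds {L : ℕ → ℕ} (B : Str L) {ℓ : ℕ} (g : Fin ℓ → ℕ → ℕ) : FormL L ℓ → Prop
  | .compEq i j m n => g i n = g j m
  | .compNe i j m n => g i n ≠ g j m
  | .rel i k a => B.rel k (fun t => g i (a t)) = true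
  | .nrel i k a => B.rel k (fun t => g i (a t)) = false
  | .appEq i m n => g i m = n
  | .appNe i m n => g i m ≠ n
  | .conj ψ => ∀ n : ℕ, Holds B g (ψ n)
  | .disj ψ => ∃ n : ℕ, Holds B g (ψ n)

/-- The condition `p` is contained in the tuple `g` of functions `ω → B`:
each coordinate of `p` is an initial segment of the corresponding function. -/
def containedIn {ℓ : ℕ} (p : Cond ℓ) (g : Fin ℓ → ℕ → ℕ) : Prop :=
  ∀ (i : Fin ℓ) (k : ℕ), k < (p i).length → (p i)[k]? = some (g i k)

/-- `g` is generic for `φ`: every sentence in some fixed countable set containing `φ`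
and closed under subformulas and formal negations is decided by some condition
contained in `g`. -/
def GenericFor {L : ℕ → ℕ} (B : Str L) {ℓ : ℕ} (g : Fin ℓ → ℕ → ℕ)
    (φ : FormL L ℓ) : Prop :=
  ∃ S : Set (FormL L ℓ), S.Countable ∧ φ ∈ S ∧
    (∀ ψ ∈ S, negat ψ ∈ S) ∧
    (∀ ψ : ℕ → FormL L ℓ, (FormL.conj ψ ∈ S ∨ FormL.disj ψ ∈ S) → ∀ n, ψ n ∈ S) ∧
    (∀ ψ ∈ S, ∃ p : Cond ℓ, validCond p ∧ containedIn p g ∧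
      (Forces B p ψ ∨ Forces B p (negat ψ)))

end Paper
namespace Paper
section Lemmas
variable {L : ℕ → ℕ} {ℓ : ℕ} (B : Str L)

theorem getElem?_of_prefix {l₁ l₂ : List ℕ} (h : l₁ <+: l₂) {k : ℕ} {x : ℕ}
    (hx : l₁[k]? = some x) : l₂[k]? = some x := by
  obtain ⟨t, rfl⟩ := h
  have hk : k < l₁.length := (List.getElem?_eq_some_iff.mp hx).1
  rw [List.getElem?_append, if_pos hk]; exact hx

theorem extendsCond_refl (p : Cond ℓ) : extendsCond p p := fun _ => List.prefix_refl _

theorem extendsCond_trans {p q r : Cond ℓ} (h1 : extendsCond q p) (h2 : extendsCond r q) :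
    extendsCond r p := fun i => (h1 i).trans (h2 i)

/-- Forcing is monotone under extension of conditions. -/
theorem forces_mono {p q : Cond ℓ} (h : extendsCond q p) :
    ∀ {φ : FormL L ℓ}, Forces B p φ → Forces B q φ
  | .compEq i j m n, ⟨x, h1, h2⟩ => ⟨x, getElem?_of_prefix (h i) h1, getElem?_of_prefix (h j) h2⟩
  | .compNe i j m n, hf => by
    rcases hf with ⟨x, y, h1, h2, hxy⟩ | ⟨m', hm', x, h1, h2⟩ | ⟨n', hn', x, h1, h2⟩
    · exact Or.inl ⟨x, y, getElem?_of_prefix (h i) h1, getElem?_of_prefix (h j) h2, hxy⟩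
    · exact Or.inr (Or.inl ⟨m', hm', x, getElem?_of_prefix (h i) h1, getElem?_of_prefix (h j) h2⟩)
    · exact Or.inr (Or.inr ⟨n', hn', x, getElem?_of_prefix (h i) h1, getElem?_of_prefix (h j) h2⟩)
  | .rel i k a, ⟨v, hv, hr⟩ => ⟨v, fun t => getElem?_of_prefix (h i) (hv t), hr⟩
  | .nrel i k a, ⟨v, hv, hr⟩ => ⟨v, fun t => getElem?_of_prefix (h i) (hv t), hr⟩
  | .appEq i m n, hf => getElem?_of_prefix (h i) hf
  | .appNe i m n, hf => by
    rcases hf with ⟨x, h1, h2⟩ | ⟨m', hm', h1⟩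
    · exact Or.inl ⟨x, getElem?_of_prefix (h i) h1, h2⟩
    · exact Or.inr ⟨m', hm', getElem?_of_prefix (h i) h1⟩
  | .conj ψ, hf => fun n q hq hqx => hf n q hq (extendsCond_trans h hqx)
  | .disj ψ, ⟨n, hn⟩ => ⟨n, forces_mono h hn⟩

theorem consist_comp {p : Cond ℓ} {i j : Fin ℓ} {m n : ℕ} (hv : validCond p)
    (h1 : Forces B p (.compEq i j m n)) (h2 : Forces B p (.compNe i j m n)) : False := by
  obtain ⟨x, h1, h2'⟩ := h1
  rcases h2 with ⟨y, z, g1, g2, hyz⟩ | ⟨m', hm', y, g1, g2⟩ | ⟨n', hn', y, g1, g2⟩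
  · rw [h1] at g1; rw [h2'] at g2
    cases g1; cases g2; exact hyz rfl
  · rw [h1] at g1; cases g1
    exact hm' ((List.getElem?_inj (List.getElem?_eq_some_iff.mp g2).1 (hv j)).mp (g2.trans h2'.symm))
  · rw [h2'] at g2; cases g2
    exact hn' ((List.getElem?_inj (List.getElem?_eq_some_iff.mp g1).1 (hv i)).mp (g1.trans h1.symm))

theorem consist_app {p : Cond ℓ} {i : Fin ℓ} {m n : ℕ} (hv : validCond p)
    (h1 : Forces B p (.appEq i m n)) (h2 : Forces B p (.appNe i m n)) : False := by
  rcases h2 with ⟨x, g1, g2⟩ | ⟨m', hm', g1⟩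
  · rw [h1] at g1; cases g1; exact g2 rfl
  · exact hm' ((List.getElem?_inj (List.getElem?_eq_some_iff.mp g1).1 (hv i)).mp (g1.trans h1.symm))

theorem consist_rel {p : Cond ℓ} {i : Fin ℓ} {k : ℕ} {a : Fin (L k) → ℕ}
    (h1 : Forces B p (.rel i k a)) (h2 : Forces B p (.nrel i k a)) : False := by
  obtain ⟨v, hv1, hr1⟩ := h1
  obtain ⟨w, hw1, hr2⟩ := h2
  have : v = w := funext fun t => Option.some_injective _ (((hv1 t).symm.trans (hw1 t)))
  subst this
  rw [hr1] at hr2; cases hr2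

/-- No valid condition forces both a formula and its formal negation. -/
theorem forces_consistent {φ : FormL L ℓ} : ∀ {p : Cond ℓ}, validCond p →
    Forces B p φ → Forces B p (negat φ) → False := by
  induction φ with
  | compEq i j m n => exact fun hv h1 h2 => consist_comp B hv h1 h2
  | compNe i j m n => exact fun hv h1 h2 => consist_comp B hv h2 h1
  | rel i k a => exact fun _ h1 h2 => consist_rel B h1 h2
  | nrel i k a => exact fun _ h1 h2 => consist_rel B h2 h1
  | appEq i m n => exact fun hv h1 h2 => consist_app B hv h1 h2
  | appNe i m n => exact fun hv h1 h2 => consist_app B hv h2 h1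
  | conj ψ ih =>
    intro p hv hc hd
    obtain ⟨n, hn⟩ := hd
    obtain ⟨r, hrv, hre, hrf⟩ := hc n p hv (extendsCond_refl p)
    exact ih n hrv hrf (forces_mono B hre hn)
  | disj ψ ih =>
    intro p hv hd hc
    obtain ⟨n, hn⟩ := hd
    obtain ⟨r, hrv, hre, hrf⟩ := hc n p hv (extendsCond_refl p)
    exact ih n hrv (forces_mono B hre hn) hrf

end Lemmas
end Paper
namespace Paper
section Dense
variable {L : ℕ → ℕ} {ℓ : ℕ} (B : Str L)

/-- Pad a list with `n` fresh elements. -/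
def pad (l : List ℕ) (n : ℕ) : List ℕ :=
  l ++ (List.range n).map (fun s => s + (l.foldr max 0) + 1)

theorem le_foldr_max {l : List ℕ} {x : ℕ} (h : x ∈ l) : x ≤ l.foldr max 0 := by
  induction l with
  | nil => cases h
  | cons a t ih =>
    rcases List.mem_cons.mp h with rfl | h
    · exact le_max_left _ _
    · exact le_trans (ih h) (le_max_right _ _)

theorem pad_prefix (l : List ℕ) (n : ℕ) : l <+: pad l n := ⟨_, rfl⟩

theorem pad_length (l : List ℕ) (n : ℕ) : n ≤ (pad l n).length := by
  simp [pad]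

theorem pad_nodup {l : List ℕ} (h : l.Nodup) (n : ℕ) : (pad l n).Nodup := by
  refine List.Nodup.append h ?_ ?_
  · exact List.nodup_range.map fun a b hab => by omega
  · intro x hx hx'
    have h1 := le_foldr_max hx
    simp only [List.mem_map, List.mem_range] at hx'
    omega

/-- Pad every coordinate of a condition. -/
def padC (q : Cond ℓ) (n : ℕ) : Cond ℓ := fun i => pad (q i) n

theorem padC_valid {q : Cond ℓ} (h : validCond q) (n : ℕ) : validCond (padC q n) :=
  fun i => pad_nodup (h i) n

theorem padC_extends (q : Cond ℓ) (n : ℕ) : extendsCond (padC q n) q :=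
  fun i => pad_prefix _ _

theorem padC_get {q : Cond ℓ} {N : ℕ} {i : Fin ℓ} {k : ℕ} (hk : k < N) :
    ∃ x, (padC q N i)[k]? = some x := by
  have : k < (padC q N i).length := lt_of_lt_of_le hk (pad_length _ _)
  exact ⟨_, List.getElem?_eq_getElem this⟩

/-- Decision density: every condition extends to one deciding any given formula. -/
theorem decide_dense (φ : FormL L ℓ) : ∀ (q : Cond ℓ), validCond q →
    ∃ r : Cond ℓ, validCond r ∧ extendsCond r q ∧
      (Forces B r φ ∨ Forces B r (negat φ)) := by
  induction φ with
  | compEq i j m n =>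
    intro q hq
    refine ⟨padC q (max m n + 1), padC_valid hq _, padC_extends q _, ?_⟩
    obtain ⟨x, hx⟩ := padC_get (q := q) (N := max m n + 1) (i := i) (k := n) (by omega)
    obtain ⟨y, hy⟩ := padC_get (q := q) (N := max m n + 1) (i := j) (k := m) (by omega)
    by_cases hxy : x = y
    · exact Or.inl ⟨x, hx, hxy ▸ hy⟩
    · exact Or.inr (Or.inl ⟨x, y, hx, hy, hxy⟩)
  | compNe i j m n =>
    intro q hq
    refine ⟨padC q (max m n + 1), padC_valid hq _, padC_extends q _, ?_⟩
    obtain ⟨x, hx⟩ := padC_get (q := q) (N := max m n + 1) (i := i) (k := n) (by omega)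
    obtain ⟨y, hy⟩ := padC_get (q := q) (N := max m n + 1) (i := j) (k := m) (by omega)
    by_cases hxy : x = y
    · exact Or.inr ⟨x, hx, hxy ▸ hy⟩
    · exact Or.inl (Or.inl ⟨x, y, hx, hy, hxy⟩)
  | rel i k a =>
    intro q hq
    classical
    set N := (Finset.univ.sup a) + 1 with hN
    refine ⟨padC q N, padC_valid hq _, padC_extends q _, ?_⟩
    have hv : ∀ t : Fin (L k), ∃ x, (padC q N i)[a t]? = some x := by
      intro t
      exact padC_get (lt_of_le_of_lt (Finset.le_sup (Finset.mem_univ t)) (Nat.lt_succ_self _))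
    choose v hv using hv
    by_cases hr : B.rel k v = true
    · exact Or.inl ⟨v, hv, hr⟩
    · exact Or.inr ⟨v, hv, Bool.not_eq_true _ ▸ hr⟩
  | nrel i k a =>
    intro q hq
    classical
    set N := (Finset.univ.sup a) + 1 with hN
    refine ⟨padC q N, padC_valid hq _, padC_extends q _, ?_⟩
    have hv : ∀ t : Fin (L k), ∃ x, (padC q N i)[a t]? = some x := by
      intro t
      exact padC_get (lt_of_le_of_lt (Finset.le_sup (Finset.mem_univ t)) (Nat.lt_succ_self _))
    choose v hv using hv
    by_cases hr : B.rel k v = true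
    · exact Or.inr ⟨v, hv, hr⟩
    · exact Or.inl ⟨v, hv, Bool.not_eq_true _ ▸ hr⟩
  | appEq i m n =>
    intro q hq
    refine ⟨padC q (m + 1), padC_valid hq _, padC_extends q _, ?_⟩
    obtain ⟨x, hx⟩ := padC_get (q := q) (N := m + 1) (i := i) (k := m) (by omega)
    by_cases hxn : x = n
    · exact Or.inl (hxn ▸ hx)
    · exact Or.inr (Or.inl ⟨x, hx, hxn⟩)
  | appNe i m n =>
    intro q hq
    refine ⟨padC q (m + 1), padC_valid hq _, padC_extends q _, ?_⟩
    obtain ⟨x, hx⟩ := padC_get (q := q) (N := m + 1) (i := i) (k := m) (by omega)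
    by_cases hxn : x = n
    · exact Or.inr (hxn ▸ hx)
    · exact Or.inl (Or.inl ⟨x, hx, hxn⟩)
  | conj ψ ih =>
    intro q hq
    classical
    by_cases hF : ∀ (n : ℕ) (q' : Cond ℓ), validCond q' → extendsCond q' q →
        ∃ r : Cond ℓ, validCond r ∧ extendsCond r q' ∧ Forces B r (ψ n)
    · exact ⟨q, hq, extendsCond_refl q, Or.inl hF⟩
    · push_neg at hF
      obtain ⟨n, q', hq', hext, hnone⟩ := hF
      obtain ⟨r, hrv, hre, hrd⟩ := ih n q' hq'
      rcases hrd with h | h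
      · exact absurd h (hnone r hrv hre)
      · exact ⟨r, hrv, extendsCond_trans hext hre, Or.inr ⟨n, h⟩⟩
  | disj ψ ih =>
    intro q hq
    classical
    by_cases hF : ∃ (n : ℕ) (r : Cond ℓ), validCond r ∧ extendsCond r q ∧ Forces B r (ψ n)
    · obtain ⟨n, r, hrv, hre, hrf⟩ := hF
      exact ⟨r, hrv, hre, Or.inl ⟨n, hrf⟩⟩
    · push_neg at hF
      refine ⟨q, hq, extendsCond_refl q, Or.inr ?_⟩
      intro n q' hq' hext
      obtain ⟨r, hrv, hre, hrd⟩ := ih n q' hq'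
      rcases hrd with h | h
      · exact absurd h (hF n r hrv (extendsCond_trans hext hre))
      · exact ⟨r, hrv, hre, h⟩
end Dense
end Paper
namespace Paper
section Truth
variable {L : ℕ → ℕ} {ℓ : ℕ} (B : Str L)

/-- Enumeration of the closure of a formula under formal negation and subformulas. -/
def cl (φ₀ : FormL L ℓ) : List ℕ → FormL L ℓ
  | [] => φ₀
  | 0 :: l => negat (cl φ₀ l)
  | (n+1) :: l =>
    match cl φ₀ l with
    | .conj ψ => ψ n
    | .disj ψ => ψ n
    | φ => φ

/-- Membership in the closure. -/
def InCl (φ₀ φ : FormL L ℓ) : Prop := ∃ l : List ℕ, cl φ₀ l = φ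

theorem InCl.self (φ₀ : FormL L ℓ) : InCl φ₀ φ₀ := ⟨[], rfl⟩

theorem InCl.negat {φ₀ φ : FormL L ℓ} (h : InCl φ₀ φ) : InCl φ₀ (Paper.negat φ) := by
  obtain ⟨l, rfl⟩ := h; exact ⟨0 :: l, rfl⟩

theorem InCl.conj_child {φ₀ : FormL L ℓ} {ψ : ℕ → FormL L ℓ}
    (h : InCl φ₀ (.conj ψ)) (n : ℕ) : InCl φ₀ (ψ n) := by
  obtain ⟨l, hl⟩ := h
  exact ⟨(n+1) :: l, by simp [cl, hl]⟩

theorem InCl.disj_child {φ₀ : FormL L ℓ} {ψ : ℕ → FormL L ℓ}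
    (h : InCl φ₀ (.disj ψ)) (n : ℕ) : InCl φ₀ (ψ n) := by
  obtain ⟨l, hl⟩ := h
  exact ⟨(n+1) :: l, by simp [cl, hl]⟩

/-- Semantic truth of the formal negation implies falsity. -/
theorem holds_negat {g : Fin ℓ → ℕ → ℕ} :
    ∀ {φ : FormL L ℓ}, Holds B g (negat φ) → ¬ Holds B g φ
  | .compEq i j m n, h1, h2 => h1 h2
  | .compNe i j m n, h1, h2 => h2 h1
  | .rel i k a, h1, h2 => by
    have h1' : B.rel k (fun t => g i (a t)) = false := h1
    rw [h2] at h1'; cases h1'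
  | .nrel i k a, h1, h2 => by
    have h1' : B.rel k (fun t => g i (a t)) = true := h1
    rw [h2] at h1'; cases h1'
  | .appEq i m n, h1, h2 => h1 h2
  | .appNe i m n, h1, h2 => h2 h1
  | .conj ψ, h1, h2 => by
    obtain ⟨n, hn⟩ := h1
    exact holds_negat hn (h2 n)
  | .disj ψ, h1, h2 => by
    obtain ⟨n, hn⟩ := h2
    exact holds_negat (h1 n) hn

/-- Two conditions contained in the same tuple of functions have a common extension
still contained in it. -/
theorem containedIn_compat {p q : Cond ℓ} {g : Fin ℓ → ℕ → ℕ}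
    (hp : containedIn p g) (hq : containedIn q g) :
    ∃ r : Cond ℓ, containedIn r g ∧ extendsCond r p ∧ extendsCond r q ∧
      (validCond p → validCond q → validCond r) := by
  classical
  have key : ∀ (l₁ l₂ : List ℕ) (f : ℕ → ℕ), (∀ k, k < l₁.length → l₁[k]? = some (f k)) →
      (∀ k, k < l₂.length → l₂[k]? = some (f k)) → l₁.length ≤ l₂.length → l₁ <+: l₂ := by
    intro l₁ l₂ f h1 h2 hle
    have : l₁ = l₂.take l₁.length := by
      apply List.ext_getElem?
      intro k
      by_cases hk : k < l₁.length
      · rw [List.getElem?_take_of_lt hk, h1 k hk, h2 k (lt_of_lt_of_le hk hle)]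
      · rw [List.getElem?_eq_none (by omega)]
        rw [List.getElem?_eq_none]
        simp only [List.length_take]
        omega
    exact this ▸ List.take_prefix _ _
  refine ⟨fun i => if (p i).length ≤ (q i).length then q i else p i, ?_, ?_, ?_, ?_⟩
  · intro i k hk
    by_cases h : (p i).length ≤ (q i).length <;> simp only [h, if_pos, if_neg, if_true, if_false] at hk ⊢
    · exact hq i k hk
    · exact hp i k hk
  · intro i
    by_cases h : (p i).length ≤ (q i).length <;> simp only [h, if_true, if_false]
    · exact key (p i) (q i) (g i) (hp i) (hq i) h
    · exact List.prefix_refl _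
  · intro i
    by_cases h : (p i).length ≤ (q i).length <;> simp only [h, if_true, if_false]
    · exact List.prefix_refl _
    · exact key (q i) (p i) (g i) (hq i) (hp i) (by omega)
  · intro hvp hvq i
    by_cases h : (p i).length ≤ (q i).length <;> simp only [h, if_true, if_false]
    · exact hvq i
    · exact hvp i

/-- Forcing implies truth along a sufficiently generic tuple of injections. -/
theorem forces_implies_holds {g : Fin ℓ → ℕ → ℕ} (hinj : ∀ i, Function.Injective (g i))
    (φ₀ : FormL L ℓ)
    (hgen : ∀ φ, InCl φ₀ φ → ∃ p : Cond ℓ, validCond p ∧ containedIn p g ∧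
      (Forces B p φ ∨ Forces B p (negat φ))) :
    ∀ (φ : FormL L ℓ), InCl φ₀ φ → ∀ (p : Cond ℓ), validCond p → containedIn p g →
      Forces B p φ → Holds B g φ := by
  intro φ
  induction φ with
  | compEq i j m n =>
    intro _ p hv hcont ⟨x, h1, h2⟩
    have e1 := hcont i n (List.getElem?_eq_some_iff.mp h1).1
    have e2 := hcont j m (List.getElem?_eq_some_iff.mp h2).1
    rw [h1] at e1; rw [h2] at e2
    show g i n = g j m
    rw [← Option.some_injective _ e1, ← Option.some_injective _ e2]
  | compNe i j m n =>
    intro _ p hv hcont hf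
    show g i n ≠ g j m
    rcases hf with ⟨x, y, h1, h2, hxy⟩ | ⟨m', hm', x, h1, h2⟩ | ⟨n', hn', x, h1, h2⟩
    · have e1 := hcont i n (List.getElem?_eq_some_iff.mp h1).1
      have e2 := hcont j m (List.getElem?_eq_some_iff.mp h2).1
      rw [h1] at e1; rw [h2] at e2
      rw [← Option.some_injective _ e1, ← Option.some_injective _ e2]
      exact hxy
    · have e1 := hcont i n (List.getElem?_eq_some_iff.mp h1).1
      have e2 := hcont j m' (List.getElem?_eq_some_iff.mp h2).1
      rw [h1] at e1; rw [h2] at e2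
      intro hcon
      apply hm'
      apply hinj j
      rw [← Option.some_injective _ e2, ← hcon, ← Option.some_injective _ e1]
    · have e1 := hcont i n' (List.getElem?_eq_some_iff.mp h1).1
      have e2 := hcont j m (List.getElem?_eq_some_iff.mp h2).1
      rw [h1] at e1; rw [h2] at e2
      intro hcon
      apply hn'
      apply hinj i
      rw [← Option.some_injective _ e1, hcon, ← Option.some_injective _ e2]
  | rel i k a =>
    intro _ p hv hcont ⟨v, hv1, hr⟩
    show B.rel k (fun t => g i (a t)) = true
    have : (fun t => g i (a t)) = v := by
      funext t
      have e1 := hcont i (a t) (List.getElem?_eq_some_iff.mp (hv1 t)).1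
      rw [hv1 t] at e1
      exact (Option.some_injective _ e1).symm
    rw [this]; exact hr
  | nrel i k a =>
    intro _ p hv hcont ⟨v, hv1, hr⟩
    show B.rel k (fun t => g i (a t)) = false
    have : (fun t => g i (a t)) = v := by
      funext t
      have e1 := hcont i (a t) (List.getElem?_eq_some_iff.mp (hv1 t)).1
      rw [hv1 t] at e1
      exact (Option.some_injective _ e1).symm
    rw [this]; exact hr
  | appEq i m n =>
    intro _ p hv hcont h1
    have e1 := hcont i m (List.getElem?_eq_some_iff.mp h1).1
    rw [h1] at e1
    exact (Option.some_injective _ e1).symm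
  | appNe i m n =>
    intro _ p hv hcont hf
    show g i m ≠ n
    rcases hf with ⟨x, h1, hx⟩ | ⟨m', hm', h1⟩
    · have e1 := hcont i m (List.getElem?_eq_some_iff.mp h1).1
      rw [h1] at e1
      rw [← Option.some_injective _ e1]
      exact hx
    · have e1 := hcont i m' (List.getElem?_eq_some_iff.mp h1).1
      rw [h1] at e1
      intro hcon
      exact hm' (hinj i (by rw [← Option.some_injective _ e1, hcon]))
  | conj ψ ih =>
    intro hin p hv hcont hf n
    have hinn : InCl φ₀ (ψ n) := hin.conj_child n
    obtain ⟨q, hqv, hqc, hqd⟩ := hgen (ψ n) hinn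
    rcases hqd with h | h
    · exact ih n hinn q hqv hqc h
    · exfalso
      obtain ⟨r, hrc, hrp, hrq, hrv⟩ := containedIn_compat hcont hqc
      obtain ⟨r', hr'v, hr'e, hr'f⟩ := hf n r (hrv hv hqv) hrp
      exact forces_consistent B hr'v hr'f
        (forces_mono B hr'e (forces_mono B hrq h))
  | disj ψ ih =>
    intro hin p hv hcont ⟨n, hn⟩
    exact ⟨n, ih n (hin.disj_child n) p hv hcont hn⟩

end Truth
end Paper
namespace Paper
section Fusion
variable {L : ℕ → ℕ}

/-- Requirement codes for the fusion construction. -/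
abbrev Req : Type := ℕ ⊕ (ℕ × ℕ × List ℕ)

/-- Grow a list so that it contains `t` and has length `> t`, by a prefix extension. -/
def grow (l : List ℕ) (t : ℕ) : List ℕ := pad (if t ∈ l then l else l ++ [t]) (t + 1)

theorem grow_prefix (l : List ℕ) (t : ℕ) : l <+: grow l t := by
  unfold grow
  split
  · exact pad_prefix _ _
  · exact List.IsPrefix.trans ⟨[t], rfl⟩ (pad_prefix _ _)

theorem grow_nodup {l : List ℕ} (h : l.Nodup) (t : ℕ) : (grow l t).Nodup := by
  by_cases ht : t ∈ l
  · rw [grow, if_pos ht]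
    exact pad_nodup h _
  · rw [grow, if_neg ht]
    refine pad_nodup ?_ _
    refine List.Nodup.append h (List.nodup_singleton t) ?_
    intro x hx hx'
    rw [List.mem_singleton] at hx'
    subst hx'
    exact ht hx

theorem grow_mem (l : List ℕ) (t : ℕ) : t ∈ grow l t := by
  apply (pad_prefix _ _).subset
  by_cases ht : t ∈ l
  · rw [if_pos ht]; exact ht
  · rw [if_neg ht]
    exact List.mem_append_right _ (List.mem_singleton_self t)

theorem grow_length (l : List ℕ) (t : ℕ) : t < (grow l t).length :=
  lt_of_lt_of_le (Nat.lt_succ_self t) (pad_length _ _)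

/-- A total version of decision density, via choice. -/
noncomputable def decideExt (B : Str L) (φ : FormL L 2) (q : Cond 2) : Cond 2 :=
  letI := Classical.propDecidable (validCond q)
  if h : validCond q then Classical.choose (decide_dense B φ q h) else q

theorem decideExt_spec (B : Str L) (φ : FormL L 2) {q : Cond 2} (h : validCond q) :
    validCond (decideExt B φ q) ∧ extendsCond (decideExt B φ q) q ∧
      (Forces B (decideExt B φ q) φ ∨ Forces B (decideExt B φ q) (negat φ)) := by
  rw [decideExt]
  rw [dif_pos h]
  exact Classical.choose_spec (decide_dense B φ q h)

def f3 (x : ℕ) : Fin 3 := ⟨x % 3, Nat.mod_lt _ (by norm_num)⟩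

theorem f3_val (a : Fin 3) : f3 a.1 = a := Fin.ext (Nat.mod_eq_of_lt a.isLt)

theorem valid_pair {P : Fin 3 → List ℕ} (h : ∀ a, (P a).Nodup) (a b : Fin 3) :
    validCond ![P a, P b] := by
  intro i
  refine Fin.cases ?_ (fun i' => ?_) i
  · exact h a
  · simpa using h b

/-- Handle a pair-requirement. -/
noncomputable def stepPair (B : Str L) (φ₀ : FormL L 2) (a b : Fin 3) (lc : List ℕ)
    (P : Fin 3 → List ℕ) : Fin 3 → List ℕ :=
  if a = b then P
  else
    Function.update (Function.update P a (decideExt B (cl φ₀ lc) ![P a, P b] 0)) b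
      (decideExt B (cl φ₀ lc) ![P a, P b] 1)

/-- One step of the fusion construction, acting on a requirement. -/
noncomputable def stepR (B : Str L) (φ₀ : FormL L 2) (R : Req) (P : Fin 3 → List ℕ) :
    Fin 3 → List ℕ :=
  match R with
  | .inl t => fun a => grow (P a) t
  | .inr (a0, b0, lc) => stepPair B φ₀ (f3 a0) (f3 b0) lc P

theorem stepPair_nodup (B : Str L) (φ₀ : FormL L 2) (a b : Fin 3) (lc : List ℕ)
    {P : Fin 3 → List ℕ} (h : ∀ c, (P c).Nodup) :
    ∀ c, (stepPair B φ₀ a b lc P c).Nodup := by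
  intro c
  by_cases hab : a = b
  · rw [stepPair, if_pos hab]; exact h c
  · rw [stepPair, if_neg hab]
    have hspec := decideExt_spec B (cl φ₀ lc) (valid_pair h a b)
    by_cases hc : c = b
    · subst hc
      simp only [Function.update_self]
      exact hspec.1 1
    · rw [Function.update_of_ne hc]
      by_cases hc' : c = a
      · subst hc'
        simp only [Function.update_self]
        exact hspec.1 0
      · rw [Function.update_of_ne hc']
        exact h c

theorem stepPair_prefix (B : Str L) (φ₀ : FormL L 2) (a b : Fin 3) (lc : List ℕ)
    {P : Fin 3 → List ℕ} (h : ∀ c, (P c).Nodup) :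
    ∀ c, P c <+: stepPair B φ₀ a b lc P c := by
  intro c
  by_cases hab : a = b
  · rw [stepPair, if_pos hab]
  · rw [stepPair, if_neg hab]
    have hext := (decideExt_spec B (cl φ₀ lc) (valid_pair h a b)).2.1
    by_cases hc : c = b
    · subst hc
      simp only [Function.update_self]
      simpa using hext 1
    · rw [Function.update_of_ne hc]
      by_cases hc' : c = a
      · subst hc'
        simp only [Function.update_self]
        simpa using hext 0
      · rw [Function.update_of_ne hc']

/-- The fusion sequence. -/
noncomputable def seqF (B : Str L) (φ₀ : FormL L 2) (l0 : Fin 3 → List ℕ) :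
    ℕ → (Fin 3 → List ℕ)
  | 0 => l0
  | m + 1 => stepR B φ₀ (Denumerable.ofNat Req m) (seqF B φ₀ l0 m)

variable (B : Str L) (φ₀ : FormL L 2) (l0 : Fin 3 → List ℕ)

theorem stepR_nodup {P : Fin 3 → List ℕ} (h : ∀ a, (P a).Nodup) (R : Req) :
    ∀ a, (stepR B φ₀ R P a).Nodup := by
  rcases R with t | ⟨a0, b0, lc⟩
  · exact fun a => grow_nodup (h a) t
  · exact stepPair_nodup B φ₀ (f3 a0) (f3 b0) lc h

theorem stepR_prefix {P : Fin 3 → List ℕ} (h : ∀ a, (P a).Nodup) (R : Req) :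
    ∀ a, P a <+: stepR B φ₀ R P a := by
  rcases R with t | ⟨a0, b0, lc⟩
  · exact fun a => grow_prefix (P a) t
  · exact stepPair_prefix B φ₀ (f3 a0) (f3 b0) lc h

theorem seqF_nodup (hl0 : ∀ a, (l0 a).Nodup) : ∀ m a, (seqF B φ₀ l0 m a).Nodup := by
  intro m
  induction m with
  | zero => exact hl0
  | succ m ih => exact stepR_nodup B φ₀ ih _

theorem seqF_mono (hl0 : ∀ a, (l0 a).Nodup) {m m' : ℕ} (h : m ≤ m') (a : Fin 3) :
    seqF B φ₀ l0 m a <+: seqF B φ₀ l0 m' a := by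
  induction m' with
  | zero =>
    rw [Nat.le_zero.mp h]
  | succ m' ih =>
    rcases Nat.eq_or_lt_of_le h with rfl | h'
    · exact List.prefix_refl _
    · exact (ih (Nat.lt_succ_iff.mp h')).trans
        (stepR_prefix B φ₀ (seqF_nodup B φ₀ l0 hl0 m') _ a)

/-- The limit function of column `a`. -/
noncomputable def limF (a : Fin 3) (k : ℕ) : ℕ :=
  (seqF B φ₀ l0 (Encodable.encode (Sum.inl k : Req) + 1) a).getD k 0

theorem seqF_inl_succ (t : ℕ) (a : Fin 3) :
    seqF B φ₀ l0 (Encodable.encode (Sum.inl t : Req) + 1) a =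
      grow (seqF B φ₀ l0 (Encodable.encode (Sum.inl t : Req)) a) t := by
  show stepR B φ₀ (Denumerable.ofNat Req (Encodable.encode (Sum.inl t : Req))) _ a = _
  rw [Denumerable.ofNat_encode]
  rfl

theorem limF_len (a : Fin 3) (k : ℕ) :
    k < (seqF B φ₀ l0 (Encodable.encode (Sum.inl k : Req) + 1) a).length := by
  rw [seqF_inl_succ]
  exact grow_length _ k

theorem limF_get (a : Fin 3) (k : ℕ) :
    (seqF B φ₀ l0 (Encodable.encode (Sum.inl k : Req) + 1) a)[k]? =
      some (limF B φ₀ l0 a k) := by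
  have h := limF_len B φ₀ l0 a k
  rw [List.getElem?_eq_getElem h]
  unfold limF
  rw [List.getD_eq_getElem _ _ h]

/-- Stability: any stage value determines the limit. -/
theorem limF_stable (hl0 : ∀ a, (l0 a).Nodup) {m : ℕ} {a : Fin 3} {k x : ℕ}
    (h : (seqF B φ₀ l0 m a)[k]? = some x) : limF B φ₀ l0 a k = x := by
  set m' := Encodable.encode (Sum.inl k : Req) + 1 with hm'
  have h1 : (seqF B φ₀ l0 (max m m') a)[k]? = some x :=
    getElem?_of_prefix (seqF_mono B φ₀ l0 hl0 (le_max_left _ _) a) h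
  have h2 : (seqF B φ₀ l0 (max m m') a)[k]? = some (limF B φ₀ l0 a k) :=
    getElem?_of_prefix (seqF_mono B φ₀ l0 hl0 (le_max_right _ _) a)
      (limF_get B φ₀ l0 a k)
  rw [h1] at h2
  exact (Option.some_injective _ h2).symm

theorem seqF_contained (hl0 : ∀ a, (l0 a).Nodup) (m : ℕ) (a : Fin 3) :
    ∀ k, k < (seqF B φ₀ l0 m a).length →
      (seqF B φ₀ l0 m a)[k]? = some (limF B φ₀ l0 a k) := by
  intro k hk
  rw [List.getElem?_eq_getElem hk]
  congr 1
  exact (limF_stable B φ₀ l0 hl0 (List.getElem?_eq_getElem hk)).symm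

theorem limF_injective (hl0 : ∀ a, (l0 a).Nodup) (a : Fin 3) : Function.Injective (limF B φ₀ l0 a) := by
  intro k k' hkk
  set m := max (Encodable.encode (Sum.inl k : Req) + 1)
    (Encodable.encode (Sum.inl k' : Req) + 1) with hm
  have hk : k < (seqF B φ₀ l0 m a).length :=
    lt_of_lt_of_le (limF_len B φ₀ l0 a k)
      ((seqF_mono B φ₀ l0 hl0 (le_max_left _ _) a).length_le)
  have hk' : k' < (seqF B φ₀ l0 m a).length :=
    lt_of_lt_of_le (limF_len B φ₀ l0 a k')
      ((seqF_mono B φ₀ l0 hl0 (le_max_right _ _) a).length_le)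
  apply (List.getElem?_inj hk (seqF_nodup B φ₀ l0 hl0 m a)).mp
  rw [seqF_contained B φ₀ l0 hl0 m a k hk, seqF_contained B φ₀ l0 hl0 m a k' hk', hkk]

theorem limF_surjective (hl0 : ∀ a, (l0 a).Nodup) (a : Fin 3) : Function.Surjective (limF B φ₀ l0 a) := by
  intro t
  have hmem : t ∈ seqF B φ₀ l0 (Encodable.encode (Sum.inl t : Req) + 1) a := by
    rw [seqF_inl_succ]
    exact grow_mem _ t
  obtain ⟨k, hk⟩ := List.mem_iff_getElem?.mp hmem
  exact ⟨k, limF_stable B φ₀ l0 hl0 hk⟩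

theorem fusion_generic (hl0 : ∀ a, (l0 a).Nodup) {a b : Fin 3} (hab : a ≠ b) (lc : List ℕ) :
    ∃ p : Cond 2, validCond p ∧ containedIn p ![limF B φ₀ l0 a, limF B φ₀ l0 b] ∧
      (Forces B p (cl φ₀ lc) ∨ Forces B p (negat (cl φ₀ lc))) := by
  set m := Encodable.encode (Sum.inr (a.1, b.1, lc) : Req) with hm
  set P := seqF B φ₀ l0 m with hP
  have hPn : ∀ c, (P c).Nodup := seqF_nodup B φ₀ l0 hl0 m
  set r := decideExt B (cl φ₀ lc) ![P a, P b] with hr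
  have hspec := decideExt_spec B (cl φ₀ lc) (valid_pair hPn a b)
  have hstep : seqF B φ₀ l0 (m + 1) =
      Function.update (Function.update P a (r 0)) b (r 1) := by
    show stepR B φ₀ (Denumerable.ofNat Req m) P = _
    rw [hm, Denumerable.ofNat_encode]
    show stepPair B φ₀ (f3 a.1) (f3 b.1) lc P = _
    rw [f3_val, f3_val, stepPair, if_neg hab]
  have hr0 : seqF B φ₀ l0 (m + 1) a = r 0 := by
    rw [hstep, Function.update_of_ne hab, Function.update_self]
  have hr1 : seqF B φ₀ l0 (m + 1) b = r 1 := by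
    rw [hstep, Function.update_self]
  refine ⟨r, hspec.1, ?_, hspec.2.2⟩
  intro i
  refine Fin.cases ?_ (fun i' => ?_) i
  · intro k hk
    have := seqF_contained B φ₀ l0 hl0 (m + 1) a k (by rw [hr0]; exact hk)
    rw [hr0] at this
    exact this
  · have hi' : i' = 0 := Fin.eq_zero _
    subst hi'
    intro k hk
    have := seqF_contained B φ₀ l0 hl0 (m + 1) b k (by rw [hr1]; exact hk)
    rw [hr1] at this
    exact this

/-- The fusion construction, packaged. -/
theorem fusion (B : Str L) (φ₀ : FormL L 2) (l0 : Fin 3 → List ℕ)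
    (hl0 : ∀ a, (l0 a).Nodup) :
    ∃ f : Fin 3 → ℕ → ℕ,
      (∀ a, Function.Bijective (f a)) ∧
      (∀ a k, k < (l0 a).length → (l0 a)[k]? = some (f a k)) ∧
      (∀ a b : Fin 3, a ≠ b → ∀ φ, InCl φ₀ φ →
        ∃ p : Cond 2, validCond p ∧ containedIn p ![f a, f b] ∧
          (Forces B p φ ∨ Forces B p (negat φ))) := by
  refine ⟨limF B φ₀ l0, fun a => ⟨limF_injective B φ₀ l0 hl0 a, limF_surjective B φ₀ l0 hl0 a⟩,
    ?_, ?_⟩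
  · intro a k hk
    exact seqF_contained B φ₀ l0 hl0 0 a k hk
  · intro a b hab φ hφ
    obtain ⟨lc, rfl⟩ := hφ
    exact fusion_generic B φ₀ l0 hl0 hab lc

end Fusion
end Paper
namespace Paper
section FunctorAlg
variable {LB LA : ℕ → ℕ} {B : Str LB} {A : Str LA}

theorem map_congr (F : IsoFunctor B A) (M N : Copy B) {g g' : ℕ ≃ ℕ} (h : g = g')
    (hg : IsIso M.1 N.1 g) (hg' : IsIso M.1 N.1 g') :
    F.map M N g hg = F.map M N g' hg' := by
  subst h
  rfl

theorem map_inverse (F : IsoFunctor B A) (g₁ g₂ : ℕ ≃ ℕ) {i j : ℕ}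
    (h : F.map (copyOf B g₁) (copyOf B g₂) (g₁.trans g₂.symm) (pullback_mor B g₁ g₂) i = j) :
    F.map (copyOf B g₂) (copyOf B g₁) (g₂.trans g₁.symm) (pullback_mor B g₂ g₁) j = i := by
  have he : (g₁.trans g₂.symm).trans (g₂.trans g₁.symm) = Equiv.refl ℕ := by
    ext x; simp
  have h₃ : IsIso (copyOf B g₁).1 (copyOf B g₁).1 ((g₁.trans g₂.symm).trans (g₂.trans g₁.symm)) := by
    rw [he]; exact isIso_refl _
  have hcomp := F.map_comp (copyOf B g₁) (copyOf B g₂) (copyOf B g₁)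
    (g₁.trans g₂.symm) (pullback_mor B g₁ g₂) (g₂.trans g₁.symm) (pullback_mor B g₂ g₁) h₃
  have hid : F.map (copyOf B g₁) (copyOf B g₁) ((g₁.trans g₂.symm).trans (g₂.trans g₁.symm)) h₃
      = Equiv.refl ℕ := by
    rw [map_congr F _ _ he h₃ (isIso_refl _)]
    exact F.map_id _ _
  have := congrArg (fun e => e i) (hid.symm.trans hcomp)
  simp only [Equiv.refl_apply, Equiv.trans_apply] at this
  rw [h] at this
  exact this.symm

theorem map_compose (F : IsoFunctor B A) (g₁ g₂ g₃ : ℕ ≃ ℕ) {i j k : ℕ}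
    (h12 : F.map (copyOf B g₁) (copyOf B g₂) (g₁.trans g₂.symm) (pullback_mor B g₁ g₂) i = j)
    (h23 : F.map (copyOf B g₂) (copyOf B g₃) (g₂.trans g₃.symm) (pullback_mor B g₂ g₃) j = k) :
    F.map (copyOf B g₁) (copyOf B g₃) (g₁.trans g₃.symm) (pullback_mor B g₁ g₃) i = k := by
  have he : (g₁.trans g₂.symm).trans (g₂.trans g₃.symm) = g₁.trans g₃.symm := by
    ext x; simp
  have h₃ : IsIso (copyOf B g₁).1 (copyOf B g₃).1 ((g₁.trans g₂.symm).trans (g₂.trans g₃.symm)) := by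
    rw [he]; exact pullback_mor B g₁ g₃
  have hcomp := F.map_comp (copyOf B g₁) (copyOf B g₂) (copyOf B g₃)
    (g₁.trans g₂.symm) (pullback_mor B g₁ g₂) (g₂.trans g₃.symm) (pullback_mor B g₂ g₃) h₃
  have heq : F.map (copyOf B g₁) (copyOf B g₃) (g₁.trans g₃.symm) (pullback_mor B g₁ g₃)
      = F.map (copyOf B g₁) (copyOf B g₃) ((g₁.trans g₂.symm).trans (g₂.trans g₃.symm)) h₃ :=
    (map_congr F _ _ he h₃ (pullback_mor B g₁ g₃)).symm
  rw [heq, hcomp]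
  simp only [Equiv.trans_apply, h12, h23]

end FunctorAlg

section MainHelpers
variable {L : ℕ → ℕ}

theorem entries_of_prefix {u l : List ℕ} {f : ℕ → ℕ} (hpre : u <+: l)
    (hl : ∀ k, k < l.length → l[k]? = some (f k)) :
    ∀ k, k < u.length → u[k]? = some (f k) := by
  intro k hk
  have hx : u[k]? = some u[k] := List.getElem?_eq_getElem hk
  have h2 := getElem?_of_prefix hpre hx
  rw [hl k (lt_of_lt_of_le hk hpre.length_le)] at h2
  rw [hx, Option.some_injective _ h2]

theorem containedIn_pair {u v : List ℕ} {g : Fin 2 → ℕ → ℕ}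
    (h0 : ∀ k, k < u.length → u[k]? = some (g 0 k))
    (h1 : ∀ k, k < v.length → v[k]? = some (g 1 k)) :
    containedIn ![u, v] g := by
  intro i
  refine Fin.cases ?_ (fun i' => ?_) i
  · exact h0
  · have hi' : i' = 0 := Fin.eq_zero _
    subst hi'
    exact h1

theorem validCond_pair {u v : List ℕ} (hu : u.Nodup) (hv : v.Nodup) :
    validCond ![u, v] := by
  intro i
  refine Fin.cases ?_ (fun i' => ?_) i
  · exact hu
  · have hi' : i' = 0 := Fin.eq_zero _
    subst hi'
    exact hv

theorem injPair {f g : ℕ → ℕ} (hf : Function.Injective f) (hg : Function.Injective g) :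
    ∀ i : Fin 2, Function.Injective (![f, g] i) := by
  intro i
  refine Fin.cases ?_ (fun i' => ?_) i
  · exact hf
  · have hi' : i' = 0 := Fin.eq_zero _
    subst hi'
    exact hg

end MainHelpers
end Paper
namespace Paper
theorem containedIn_cond {r : Cond 2} {g : Fin 2 → ℕ → ℕ}
    (h0 : ∀ k, k < (r 0).length → (r 0)[k]? = some (g 0 k))
    (h1 : ∀ k, k < (r 1).length → (r 1)[k]? = some (g 1 k)) :
    containedIn r g := by
  intro i
  refine Fin.cases ?_ (fun i' => ?_) i
  · exact h0
  · have hi' : i' = 0 := Fin.eq_zero _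
    subst hi'
    exact h1
end Paper
namespace Paper

/-- **Lemma 3.9.**  Let `F : Iso(B) → Iso(A)` be a Borel functor with `A = F(B)`,
and let `Θ i j` be the sentence of the forcing language for `(B*)²` expressing
`F(B_{ġ₁}, ġ₂⁻¹∘ġ₁, B_{ġ₂})(i) = j` (a countable conjunction; its meaning is pinned
down by the hypothesis `hΘ` on all pairs of bijections).  Define
`Dom = {(b̄,i) : (b̄,b̄) ⊩ Θ i i}` and `(b̄,i) ∼ (c̄,j) ⟺ (b̄,c̄) ⊩ Θ i j`.
Then `∼` is an equivalence relation on `Dom`. -/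
theorem sim_is_equivalence (LA LB : ℕ → ℕ) (A : Str LA) (B : Str LB)
    (F : IsoFunctor B A) (hBorel : IsBorelFunctor F)
    (hFB : (F.obj (selfCopy B)).1 = A)
    (Θ : ℕ → ℕ → FormL LB 2)
    (hconj : ∀ i j : ℕ, ∃ ψ : ℕ → FormL LB 2, Θ i j = FormL.conj ψ)
    (hΘ : ∀ (g₁ g₂ : ℕ ≃ ℕ) (i j : ℕ),
      Holds B ![⇑g₁, ⇑g₂] (Θ i j) ↔
        F.map (copyOf B g₁) (copyOf B g₂) (g₁.trans g₂.symm)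
          (pullback_mor B g₁ g₂) i = j) :
    -- reflexivity on `Dom`
    (∀ (b : List ℕ) (i : ℕ), b.Nodup → Forces B ![b, b] (Θ i i) →
      Forces B ![b, b] (Θ i i)) ∧
    -- symmetry
    (∀ (b c : List ℕ) (i j : ℕ), b.Nodup → c.Nodup →
      Forces B ![b, b] (Θ i i) → Forces B ![c, c] (Θ j j) →
      Forces B ![b, c] (Θ i j) → Forces B ![c, b] (Θ j i)) ∧
    -- transitivity
    (∀ (b c d : List ℕ) (i j k : ℕ), b.Nodup → c.Nodup → d.Nodup →
      Forces B ![b, b] (Θ i i) → Forces B ![c, c] (Θ j j) → Forces B ![d, d] (Θ k k) →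
      Forces B ![b, c] (Θ i j) → Forces B ![c, d] (Θ j k) →
      Forces B ![b, d] (Θ i k)) := by
  set φ₀ : FormL LB 2 := FormL.conj (fun m => Θ (Nat.unpair m).1 (Nat.unpair m).2) with hφ₀
  have hΘin : ∀ i j : ℕ, InCl φ₀ (Θ i j) := by
    intro i j
    have h := InCl.conj_child (φ₀ := φ₀)
      (ψ := fun m => Θ (Nat.unpair m).1 (Nat.unpair m).2) (InCl.self φ₀) (Nat.pair i j)
    rw [Nat.unpair_pair] at h
    exact h
  refine ⟨fun b i _ h => h, ?_, ?_⟩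
  -- symmetry
  · intro b c i j hb hc _ _ hbc
    obtain ⟨ψ', hΘji⟩ := hconj j i
    rw [hΘji]
    intro n q hqv hqe
    obtain ⟨r, hrv, hre, hrd⟩ := decide_dense B (ψ' n) q hqv
    rcases hrd with hpos | hneg
    · exact ⟨r, hrv, hre, hpos⟩
    exfalso
    have hrb : b <+: r 1 := (hqe 1).trans (hre 1)
    have hrc : c <+: r 0 := (hqe 0).trans (hre 0)
    obtain ⟨f, hbij, hcont, hgen⟩ := fusion B φ₀ ![r 1, r 0, []] (by
      intro a; fin_cases a
      · exact hrv 1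
      · exact hrv 0
      · exact List.nodup_nil)
    have hc0 : ∀ k, k < (r 1).length → (r 1)[k]? = some (f 0 k) := hcont 0
    have hc1 : ∀ k, k < (r 0).length → (r 0)[k]? = some (f 1 k) := hcont 1
    have hH12 : Holds B ![f 0, f 1] (Θ i j) :=
      forces_implies_holds B (injPair (hbij 0).1 (hbij 1).1) φ₀ (hgen 0 1 (by decide))
        (Θ i j) (hΘin i j) ![b, c] (validCond_pair hb hc)
        (containedIn_pair (entries_of_prefix hrb hc0) (entries_of_prefix hrc hc1)) hbc
    have hmap12 := (hΘ (Equiv.ofBijective (f 0) (hbij 0)) (Equiv.ofBijective (f 1) (hbij 1))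
      i j).mp hH12
    have hmap21 := map_inverse F _ _ hmap12
    have hH21 : Holds B ![f 1, f 0] (Θ j i) :=
      (hΘ (Equiv.ofBijective (f 1) (hbij 1)) (Equiv.ofBijective (f 0) (hbij 0)) j i).mpr hmap21
    rw [hΘji] at hH21
    have hHn : Holds B ![f 1, f 0] (ψ' n) := hH21 n
    have hInJi : InCl φ₀ (FormL.conj ψ') := by rw [← hΘji]; exact hΘin j i
    have hHneg : Holds B ![f 1, f 0] (negat (ψ' n)) :=
      forces_implies_holds B (injPair (hbij 1).1 (hbij 0).1) φ₀ (hgen 1 0 (by decide))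
        (negat (ψ' n)) ((hInJi.conj_child n).negat) r hrv (containedIn_cond hc1 hc0) hneg
    exact holds_negat B hHneg hHn
  -- transitivity
  · intro b c d i j k hb hc hd _ _ _ hbc hcd
    obtain ⟨ψ, hΘik⟩ := hconj i k
    rw [hΘik]
    intro n q hqv hqe
    obtain ⟨r, hrv, hre, hrd⟩ := decide_dense B (ψ n) q hqv
    rcases hrd with hpos | hneg
    · exact ⟨r, hrv, hre, hpos⟩
    exfalso
    have hrb : b <+: r 0 := (hqe 0).trans (hre 0)
    have hrd' : d <+: r 1 := (hqe 1).trans (hre 1)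
    obtain ⟨f, hbij, hcont, hgen⟩ := fusion B φ₀ ![r 0, c, r 1] (by
      intro a; fin_cases a
      · exact hrv 0
      · exact hc
      · exact hrv 1)
    have hc0 : ∀ k' : ℕ, k' < (r 0).length → (r 0)[k']? = some (f 0 k') := hcont 0
    have hc1 : ∀ k' : ℕ, k' < c.length → (c)[k']? = some (f 1 k') := hcont 1
    have hc2 : ∀ k' : ℕ, k' < (r 1).length → (r 1)[k']? = some (f 2 k') := hcont 2
    have hH12 : Holds B ![f 0, f 1] (Θ i j) :=
      forces_implies_holds B (injPair (hbij 0).1 (hbij 1).1) φ₀ (hgen 0 1 (by decide))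
        (Θ i j) (hΘin i j) ![b, c] (validCond_pair hb hc)
        (containedIn_pair (entries_of_prefix hrb hc0) hc1) hbc
    have hH23 : Holds B ![f 1, f 2] (Θ j k) :=
      forces_implies_holds B (injPair (hbij 1).1 (hbij 2).1) φ₀ (hgen 1 2 (by decide))
        (Θ j k) (hΘin j k) ![c, d] (validCond_pair hc hd)
        (containedIn_pair hc1 (entries_of_prefix hrd' hc2)) hcd
    have hmap12 := (hΘ (Equiv.ofBijective (f 0) (hbij 0)) (Equiv.ofBijective (f 1) (hbij 1))
      i j).mp hH12
    have hmap23 := (hΘ (Equiv.ofBijective (f 1) (hbij 1)) (Equiv.ofBijective (f 2) (hbij 2))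
      j k).mp hH23
    have hmap13 := map_compose F _ _ _ hmap12 hmap23
    have hH13 : Holds B ![f 0, f 2] (Θ i k) :=
      (hΘ (Equiv.ofBijective (f 0) (hbij 0)) (Equiv.ofBijective (f 2) (hbij 2)) i k).mpr hmap13
    rw [hΘik] at hH13
    have hHn : Holds B ![f 0, f 2] (ψ n) := hH13 n
    have hInIk : InCl φ₀ (FormL.conj ψ) := by rw [← hΘik]; exact hΘin i k
    have hHneg : Holds B ![f 0, f 2] (negat (ψ n)) :=
      forces_implies_holds B (injPair (hbij 0).1 (hbij 2).1) φ₀ (hgen 0 2 (by decide))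
        (negat (ψ n)) ((hInIk.conj_child n).negat) r hrv (containedIn_cond hc0 hc2) hneg
    exact holds_negat B hHneg hHn

end Paper
end

section
/- Let A be a countable structure. The following are equivalent: (1) there is a continuous group isomorphism between Aut(A) and S_∞; (2) there are an n ∈ ω, an L_{ω₁ω}-definable (equivalently, automorphism-invariant) set D ⊆ A^n, and an L_{ω₁ω}-definable (equivalently, automorphism-invariant) equivalence relation E ⊆ D² with infinitely many equivalence classes, such that the E-equivalence classes are absolutely indiscernible (every permutation of the set of E-equivalence classes extends to an automorphism of A) and, in the expansion of A by a relation naming each E-equivalence class, every element of A is L_{ω₁ω}-definable (equivalently, the only automorphism of A fixing each E-equivalence class setwise is the identity). -/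
namespace Paper

open Topology Filter in
theorem aut_forward (L : ℕ → ℕ) (A : Str L)
    (H : ↥(aut A) ≃* Equiv.Perm ℕ)
    (hc : Continuous fun g : ↥(aut A) => ((H g : Equiv.Perm ℕ) : ℕ → ℕ)) :
    (∃ (n : ℕ) (D : Set (Fin n → ℕ)) (E : (Fin n → ℕ) → (Fin n → ℕ) → Prop),
      (∀ g : Equiv.Perm ℕ, IsIso A A g → ∀ v ∈ D, (fun k => g (v k)) ∈ D) ∧
      (∀ g : Equiv.Perm ℕ, IsIso A A g → ∀ v ∈ D, ∀ w ∈ D,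
        E v w → E (fun k => g (v k)) (fun k => g (w k))) ∧
      (∀ v ∈ D, E v v) ∧
      (∀ v ∈ D, ∀ w ∈ D, E v w → E w v) ∧
      (∀ v ∈ D, ∀ w ∈ D, ∀ u ∈ D, E v w → E w u → E v u) ∧
      (∃ r : ℕ → (Fin n → ℕ), (∀ k, r k ∈ D) ∧ ∀ k l : ℕ, k ≠ l → ¬E (r k) (r l)) ∧
      (∀ π : (Fin n → ℕ) → (Fin n → ℕ),
        (∀ v ∈ D, π v ∈ D) →
        (∀ v ∈ D, ∀ w ∈ D, (E v w ↔ E (π v) (π w))) →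
        (∀ w ∈ D, ∃ v ∈ D, E (π v) w) →
        ∃ g : Equiv.Perm ℕ, IsIso A A g ∧ ∀ v ∈ D, E (fun k => g (v k)) (π v)) ∧
      (∀ g : Equiv.Perm ℕ, IsIso A A g →
        (∀ v ∈ D, E (fun k => g (v k)) v) → g = 1)) := by
  classical
  -- Step 1: {g | H g 0 = 0} is an open neighbourhood of 1
  have h2 : Continuous fun g : ↥(aut A) => (H g : Equiv.Perm ℕ) 0 := (continuous_apply 0).comp hc
  have hWopen : IsOpen {g : ↥(aut A) | (H g : Equiv.Perm ℕ) 0 = 0} := by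
    have := h2.isOpen_preimage {0} (isOpen_discrete _)
    simpa [Set.preimage] using this
  have h1 : {g : ↥(aut A) | (H g : Equiv.Perm ℕ) 0 = 0} ∈ 𝓝 (1 : ↥(aut A)) :=
    hWopen.mem_nhds (by simp)
  have hnhds : 𝓝 (1 : ↥(aut A)) =
      Filter.comap (fun g : ↥(aut A) => (((g : Equiv.Perm ℕ)) : ℕ → ℕ)) (𝓝 id) := by
    rw [nhds_induced, nhds_induced, Filter.comap_comap]
    rfl
  rw [hnhds, Filter.mem_comap] at h1
  obtain ⟨S, hS, hSsub⟩ := h1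
  rw [nhds_pi, Filter.mem_pi] at hS
  obtain ⟨I, hIfin, t, ht, htsub⟩ := hS
  have ht' : ∀ i, i ∈ t i := by
    intro i
    have := ht i
    simpa [nhds_discrete] using this
  -- Step 2: the tuple abar
  set n := hIfin.toFinset.card with hn
  set abar : Fin n → ℕ := fun k => ((hIfin.toFinset.equivFin.symm k) : ℕ) with hab
  have hIsub : ∀ i ∈ I, ∃ k : Fin n, abar k = i := by
    intro i hi
    refine ⟨hIfin.toFinset.equivFin ⟨i, hIfin.mem_toFinset.mpr hi⟩, ?_⟩
    rw [hab]
    simp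
  have key : ∀ g : ↥(aut A), (∀ k, (g : Equiv.Perm ℕ) (abar k) = abar k) →
      (H g : Equiv.Perm ℕ) 0 = 0 := by
    intro g hg
    apply hSsub
    apply htsub
    intro i hi
    obtain ⟨k, hk⟩ := hIsub i hi
    have := hg k
    rw [hk] at this
    show (g : Equiv.Perm ℕ) i ∈ t i
    rw [this]
    exact ht' i
  have welldef : ∀ g h : ↥(aut A), (∀ k, (g : Equiv.Perm ℕ) (abar k) = (h : Equiv.Perm ℕ) (abar k)) →
      (H g : Equiv.Perm ℕ) 0 = (H h : Equiv.Perm ℕ) 0 := by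
    intro g h hgh
    have hk : ∀ k, ((h⁻¹ * g : ↥(aut A)) : Equiv.Perm ℕ) (abar k) = abar k := by
      intro k
      show (h : Equiv.Perm ℕ)⁻¹ ((g : Equiv.Perm ℕ) (abar k)) = abar k
      rw [hgh k]
      exact Equiv.symm_apply_apply _ _
    have hh := key _ hk
    rw [map_mul, map_inv] at hh
    have := congrArg (H h : Equiv.Perm ℕ) hh
    simpa using this
  -- Step 3: D, c, E
  set D : Set (Fin n → ℕ) :=
    {v | ∃ g : ↥(aut A), v = fun k => (g : Equiv.Perm ℕ) (abar k)} with hD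
  set c : (Fin n → ℕ) → ℕ := (fun v =>
    if h : v ∈ D then (H h.choose : Equiv.Perm ℕ) 0 else 0) with hcdef
  have hcval : ∀ g : ↥(aut A), c (fun k => (g : Equiv.Perm ℕ) (abar k)) = (H g : Equiv.Perm ℕ) 0 := by
    intro g
    have hmem : (fun k => (g : Equiv.Perm ℕ) (abar k)) ∈ D := ⟨g, rfl⟩
    rw [hcdef]
    simp only [dif_pos hmem]
    apply welldef
    intro k
    exact (congrFun hmem.choose_spec k).symm
  set E : (Fin n → ℕ) → (Fin n → ℕ) → Prop := (fun v w => v ∈ D ∧ w ∈ D ∧ c v = c w) with hEdef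
  -- auxiliary facts
  have hmul : ∀ (g : Equiv.Perm ℕ) (hg : IsIso A A g) (a : ↥(aut A)),
      (fun k => g ((a : Equiv.Perm ℕ) (abar k))) = fun k => (((⟨g, hg⟩ : ↥(aut A)) * a : ↥(aut A)) : Equiv.Perm ℕ) (abar k) := fun _ _ _ => rfl
  have hr : ∀ m : ℕ, c (fun k => ((H.symm (Equiv.swap 0 m) : ↥(aut A)) : Equiv.Perm ℕ) (abar k)) = m := by
    intro m
    rw [hcval]
    rw [MulEquiv.apply_symm_apply]
    exact Equiv.swap_apply_left 0 m
  refine ⟨n, D, E, ?_, ?_, ?_, ?_, ?_, ?_, ?_, ?_⟩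
  · -- D invariant
    rintro g hg v ⟨a, rfl⟩
    exact ⟨(⟨g, hg⟩ : ↥(aut A)) * a, hmul g hg a⟩
  · -- E invariant
    rintro g hg v hv w hw ⟨_, _, hvw⟩
    obtain ⟨a, rfl⟩ := hv
    obtain ⟨b, rfl⟩ := hw
    refine ⟨⟨(⟨g, hg⟩ : ↥(aut A)) * a, hmul g hg a⟩, ⟨(⟨g, hg⟩ : ↥(aut A)) * b, hmul g hg b⟩, ?_⟩
    rw [hmul g hg a, hmul g hg b, hcval, hcval, map_mul, map_mul]
    rw [hcval, hcval] at hvw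
    show (H ⟨g, hg⟩ : Equiv.Perm ℕ) ((H a : Equiv.Perm ℕ) 0)
      = (H ⟨g, hg⟩ : Equiv.Perm ℕ) ((H b : Equiv.Perm ℕ) 0)
    rw [hvw]
  · exact fun v hv => ⟨hv, hv, rfl⟩
  · rintro v _ w _ ⟨h1, h2, h3⟩; exact ⟨h2, h1, h3.symm⟩
  · rintro v _ w _ u _ ⟨h1, h2, h3⟩ ⟨_, h5, h6⟩; exact ⟨h1, h5, h3.trans h6⟩
  · -- infinitely many classes
    refine ⟨fun m => fun k => ((H.symm (Equiv.swap 0 m) : ↥(aut A)) : Equiv.Perm ℕ) (abar k),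
      fun m => ⟨_, rfl⟩, ?_⟩
    rintro k l hkl ⟨_, _, hcc⟩
    rw [hr k, hr l] at hcc
    exact hkl hcc
  · -- absolute indiscernibility
    intro π hπD hπE hπsurj
    have hED : ∀ v ∈ D, ∀ w ∈ D, c v = c w → E v w := fun v hv w hw h => ⟨hv, hw, h⟩
    have hcE : ∀ v w, E v w → c v = c w := fun v w h => h.2.2
    set rr : ℕ → (Fin n → ℕ) :=
      (fun m => fun k => ((H.symm (Equiv.swap 0 m) : ↥(aut A)) : Equiv.Perm ℕ) (abar k)) with hrr
    have hrrD : ∀ m, rr m ∈ D := fun m => ⟨_, rfl⟩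
    have hrrc : ∀ m, c (rr m) = m := fun m => hr m
    set σ0 : ℕ → ℕ := (fun m => c (π (rr m))) with hσ0
    have hσinj : Function.Injective σ0 := by
      intro m m' hmm
      have hE1 : E (π (rr m)) (π (rr m')) := hED _ (hπD _ (hrrD m)) _ (hπD _ (hrrD m')) hmm
      have hE2 : E (rr m) (rr m') := (hπE _ (hrrD m) _ (hrrD m')).mpr hE1
      have := hcE _ _ hE2
      rwa [hrrc m, hrrc m'] at this
    have hErr : ∀ v ∈ D, E (rr (c v)) v := by
      intro v hv
      exact hED _ (hrrD _) _ hv (hrrc (c v))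
    have hσc : ∀ v ∈ D, σ0 (c v) = c (π v) := by
      intro v hv
      have hE1 : E (π (rr (c v))) (π v) := (hπE _ (hrrD _) _ hv).mp (hErr v hv)
      exact hcE _ _ hE1
    have hσsurj : Function.Surjective σ0 := by
      intro m
      obtain ⟨v, hv, hEv⟩ := hπsurj (rr m) (hrrD m)
      refine ⟨c v, ?_⟩
      rw [hσc v hv]
      have := hcE _ _ hEv
      rwa [hrrc m] at this
    set σ : Equiv.Perm ℕ := Equiv.ofBijective σ0 ⟨hσinj, hσsurj⟩ with hσ
    have hσap : ∀ m, σ m = σ0 m := fun m => rfl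
    refine ⟨((H.symm σ : ↥(aut A)) : Equiv.Perm ℕ), mem_aut (H.symm σ).2, ?_⟩
    rintro v ⟨a, rfl⟩
    have hm1 : (fun k => ((H.symm σ : ↥(aut A)) : Equiv.Perm ℕ) ((a : Equiv.Perm ℕ) (abar k)))
        = fun k => ((H.symm σ * a : ↥(aut A)) : Equiv.Perm ℕ) (abar k) := rfl
    refine ⟨?_, ?_, ?_⟩
    · rw [hm1]; exact ⟨_, rfl⟩
    · exact hπD _ ⟨a, rfl⟩
    · rw [hm1, hcval, map_mul]
      have : (H (H.symm σ) : Equiv.Perm ℕ) ((H a : Equiv.Perm ℕ) 0) = σ ((H a : Equiv.Perm ℕ) 0) := by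
        rw [MulEquiv.apply_symm_apply]
      show (H (H.symm σ) * H a : Equiv.Perm ℕ) 0 = c (π (fun k => (a : Equiv.Perm ℕ) (abar k)))
      rw [Equiv.Perm.mul_apply, this, hσap, ← hcval a]
      exact hσc _ ⟨a, rfl⟩
  · -- rigidity
    intro g hg hfix
    have hone : ∀ m, (H ⟨g, hg⟩ : Equiv.Perm ℕ) m = m := by
      intro m
      have h1 := hfix _ ⟨H.symm (Equiv.swap 0 m), rfl⟩
      have hcc := h1.2.2
      rw [hmul g hg _, hcval, hcval, map_mul] at hcc
      rw [MulEquiv.apply_symm_apply] at hcc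
      rw [Equiv.Perm.mul_apply, Equiv.swap_apply_left] at hcc
      exact hcc
    have hH1 : H ⟨g, hg⟩ = 1 := Equiv.ext hone
    have hgone : (⟨g, hg⟩ : ↥(aut A)) = 1 := by
      apply H.injective
      rw [hH1, map_one]
    have := congrArg Subtype.val hgone
    simpa using this

theorem aut_backward (L : ℕ → ℕ) (A : Str L)
    (n : ℕ) (D : Set (Fin n → ℕ)) (E : (Fin n → ℕ) → (Fin n → ℕ) → Prop)
    (hD : ∀ g : Equiv.Perm ℕ, IsIso A A g → ∀ v ∈ D, (fun k => g (v k)) ∈ D)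
    (hE : ∀ g : Equiv.Perm ℕ, IsIso A A g → ∀ v ∈ D, ∀ w ∈ D,
        E v w → E (fun k => g (v k)) (fun k => g (w k)))
    (hrefl : ∀ v ∈ D, E v v)
    (hsymm : ∀ v ∈ D, ∀ w ∈ D, E v w → E w v)
    (htrans : ∀ v ∈ D, ∀ w ∈ D, ∀ u ∈ D, E v w → E w u → E v u)
    (hinf : ∃ r : ℕ → (Fin n → ℕ), (∀ k, r k ∈ D) ∧ ∀ k l : ℕ, k ≠ l → ¬E (r k) (r l))
    (hindisc : ∀ π : (Fin n → ℕ) → (Fin n → ℕ),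
        (∀ v ∈ D, π v ∈ D) →
        (∀ v ∈ D, ∀ w ∈ D, (E v w ↔ E (π v) (π w))) →
        (∀ w ∈ D, ∃ v ∈ D, E (π v) w) →
        ∃ g : Equiv.Perm ℕ, IsIso A A g ∧ ∀ v ∈ D, E (fun k => g (v k)) (π v))
    (hrigid : ∀ g : Equiv.Perm ℕ, IsIso A A g →
        (∀ v ∈ D, E (fun k => g (v k)) v) → g = 1) :
    ∃ H : ↥(aut A) ≃* Equiv.Perm ℕ,
      Continuous fun g : ↥(aut A) => ((H g : Equiv.Perm ℕ) : ℕ → ℕ) := by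
  classical
  obtain ⟨r, hrD, hrne⟩ := hinf
  let s : Setoid {v : Fin n → ℕ // v ∈ D} :=
    ⟨fun v w => E v.1 w.1,
      ⟨fun v => hrefl _ v.2, fun {v w} h => hsymm _ v.2 _ w.2 h,
        fun {v w u} h1 h2 => htrans _ v.2 _ w.2 _ u.2 h1 h2⟩⟩
  haveI hcount : Countable (Quotient s) := inferInstance
  haveI hinfQ : Infinite (Quotient s) := by
    apply Infinite.of_injective (fun m : ℕ => Quotient.mk s ⟨r m, hrD m⟩)
    intro k l hkl
    by_contra hne
    exact hrne k l hne (Quotient.exact hkl)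
  obtain ⟨e⟩ : Nonempty (Quotient s ≃ ℕ) :=
    (nonempty_denumerable (Quotient s)).map fun d => @Denumerable.eqv _ d
  have lift_mem : ∀ (g : ↥(aut A)) (v : {v : Fin n → ℕ // v ∈ D}),
      (fun k => (g : Equiv.Perm ℕ) (v.1 k)) ∈ D := fun g v => hD _ (mem_aut g.2) _ v.2
  let act : ↥(aut A) → Quotient s → Quotient s := fun g =>
    Quotient.map (fun v => ⟨fun k => (g : Equiv.Perm ℕ) (v.1 k), lift_mem g v⟩)
      (fun v w h => hE _ (mem_aut g.2) _ v.2 _ w.2 h)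
  have act_comp : ∀ g h : ↥(aut A), ∀ q, act (g * h) q = act g (act h q) := by
    intro g h q
    induction q using Quotient.ind with
    | _ v => rfl
  have act_one : ∀ q, act 1 q = q := by
    intro q
    induction q using Quotient.ind with
    | _ v => exact congrArg _ (Subtype.ext rfl)
  have act_inv_left : ∀ (g : ↥(aut A)) q, act g⁻¹ (act g q) = q := fun g q => by
    rw [← act_comp, inv_mul_cancel, act_one]
  have act_inv_right : ∀ (g : ↥(aut A)) q, act g (act g⁻¹ q) = q := fun g q => by
    rw [← act_comp, mul_inv_cancel, act_one]
  let Φ : ↥(aut A) → Equiv.Perm (Quotient s) := fun g =>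
    ⟨act g, act g⁻¹, act_inv_left g, act_inv_right g⟩
  let Hmap : ↥(aut A) →* Equiv.Perm ℕ :=
    MonoidHom.mk' (fun g => e.permCongr (Φ g)) (by
      intro g h
      apply Equiv.ext
      intro m
      show e (act (g * h) (e.symm m)) = e (act g (e.symm (e (act h (e.symm m)))))
      rw [act_comp, Equiv.symm_apply_apply])
  -- helper: E vs quotient equality
  have hEiff : ∀ v (hv : v ∈ D) w (hw : w ∈ D),
      E v w ↔ Quotient.mk s ⟨v, hv⟩ = Quotient.mk s ⟨w, hw⟩ := by
    intro v hv w hw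
    exact ⟨fun h => Quotient.sound h, fun h => Quotient.exact h⟩
  have hinjH : Function.Injective Hmap := by
    rw [injective_iff_map_eq_one]
    intro g hg
    have hg' : e.permCongr (Φ g) = 1 := hg
    have h2 : Φ g = 1 := by
      apply e.permCongr.injective
      rw [hg']
      apply Equiv.ext
      intro m
      show (1 : Equiv.Perm ℕ) m = e ((1 : Equiv.Perm (Quotient s)) (e.symm m))
      simp
    have hfix : ∀ v ∈ D, E (fun k => (g : Equiv.Perm ℕ) (v k)) v := by
      intro v hv
      have h3 := congrArg (fun p : Equiv.Perm (Quotient s) => p (Quotient.mk s ⟨v, hv⟩)) h2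
      exact Quotient.exact h3
    have := hrigid _ (mem_aut g.2) hfix
    exact Subtype.ext (this.trans (OneMemClass.coe_one _).symm)
  have hsurjH : Function.Surjective Hmap := by
    intro σ
    set τ : Equiv.Perm (Quotient s) := e.permCongr.symm σ with hτ
    set π : (Fin n → ℕ) → (Fin n → ℕ) := (fun v =>
      if h : v ∈ D then ((τ (Quotient.mk s ⟨v, h⟩)).out).1 else v) with hπ
    have hπD : ∀ v ∈ D, π v ∈ D := by
      intro v hv
      rw [hπ]
      simp only [dif_pos hv]
      exact ((τ (Quotient.mk s ⟨v, hv⟩)).out).2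
    have keyπ : ∀ v (hv : v ∈ D),
        Quotient.mk s ⟨π v, hπD v hv⟩ = τ (Quotient.mk s ⟨v, hv⟩) := by
      intro v hv
      have h1 : π v = ((τ (Quotient.mk s ⟨v, hv⟩)).out).1 := by rw [hπ]; simp only [dif_pos hv]
      have h2 : (⟨π v, hπD v hv⟩ : {v : Fin n → ℕ // v ∈ D})
          = (τ (Quotient.mk s ⟨v, hv⟩)).out := Subtype.ext h1
      rw [h2, Quotient.out_eq]
    have hπE : ∀ v ∈ D, ∀ w ∈ D, (E v w ↔ E (π v) (π w)) := by
      intro v hv w hw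
      rw [hEiff v hv w hw, hEiff _ (hπD v hv) _ (hπD w hw), keyπ v hv, keyπ w hw]
      exact (Equiv.apply_eq_iff_eq τ).symm
    have hπsurj : ∀ w ∈ D, ∃ v ∈ D, E (π v) w := by
      intro w hw
      set q : Quotient s := τ.symm (Quotient.mk s ⟨w, hw⟩) with hq
      refine ⟨q.out.1, q.out.2, ?_⟩
      have h6 : τ (Quotient.mk s (⟨q.out.1, q.out.2⟩ : {v : Fin n → ℕ // v ∈ D}))
          = Quotient.mk s ⟨w, hw⟩ := by
        have h5 : Quotient.mk s (⟨q.out.1, q.out.2⟩ : {v : Fin n → ℕ // v ∈ D}) = q :=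
          Quotient.out_eq q
        rw [h5, hq, Equiv.apply_symm_apply]
      rw [hEiff _ (hπD _ q.out.2) _ hw, keyπ _ q.out.2]
      exact h6
    obtain ⟨g, hgiso, hgE⟩ := hindisc π hπD hπE hπsurj
    refine ⟨⟨g, hgiso⟩, ?_⟩
    have hΦ : Φ ⟨g, hgiso⟩ = τ := by
      apply Equiv.ext
      intro q
      induction q using Quotient.ind with
      | _ v =>
        have h1 := hgE v.1 v.2
        have h2 : Quotient.mk s ⟨fun k => g (v.1 k), lift_mem ⟨g, hgiso⟩ v⟩
            = Quotient.mk s ⟨π v.1, hπD _ v.2⟩ := Quotient.sound h1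
        show Quotient.mk s ⟨fun k => g (v.1 k), lift_mem ⟨g, hgiso⟩ v⟩ = τ (Quotient.mk s v)
        rw [h2]
        rw [show (Quotient.mk s v) = Quotient.mk s ⟨v.1, v.2⟩ from rfl]
        exact keyπ v.1 v.2
    show e.permCongr (Φ ⟨g, hgiso⟩) = σ
    rw [hΦ, hτ, Equiv.apply_symm_apply]
  refine ⟨MulEquiv.ofBijective Hmap ⟨hinjH, hsurjH⟩, ?_⟩
  have hcoe : Continuous fun g : ↥(aut A) => (((g : Equiv.Perm ℕ)) : ℕ → ℕ) :=
    continuous_induced_dom.comp continuous_subtype_val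
  apply continuous_pi
  intro m
  set v : {v : Fin n → ℕ // v ∈ D} := (e.symm m).out with hv
  set f : (Fin n → ℕ) → ℕ := (fun w =>
    if h : w ∈ D then e (Quotient.mk s ⟨w, h⟩) else 0) with hf
  have heq : (fun g : ↥(aut A) =>
        ((MulEquiv.ofBijective Hmap ⟨hinjH, hsurjH⟩ g : Equiv.Perm ℕ) : ℕ → ℕ) m)
      = fun g : ↥(aut A) => f (fun k => (g : Equiv.Perm ℕ) (v.1 k)) := by
    funext g
    have hmem := lift_mem g v
    show e (act g (e.symm m)) = f (fun k => (g : Equiv.Perm ℕ) (v.1 k))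
    rw [hf]
    simp only [dif_pos hmem]
    congr 1
    rw [← Quotient.out_eq (e.symm m), ← hv]
    rfl
  rw [show (fun g : ↥(aut A) =>
        ((MulEquiv.ofBijective Hmap ⟨hinjH, hsurjH⟩ g : Equiv.Perm ℕ) : ℕ → ℕ) m)
      = fun g : ↥(aut A) => f (fun k => (g : Equiv.Perm ℕ) (v.1 k)) from heq]
  have hinner : Continuous fun (g : ↥(aut A)) => fun k : Fin n => (g : Equiv.Perm ℕ) (v.1 k) :=
    continuous_pi fun k => (continuous_apply (v.1 k)).comp hcoe
  have hf2 : Continuous f := continuous_of_discreteTopology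
  exact hf2.comp hinner

/-- **Theorem 4.3.**  Let `A` be a countable structure.  There is a continuous group
isomorphism between `Aut(A)` and `S_∞` if and only if `A` has an invariantly
(`L_{ω₁ω}`-)definable set of absolutely indiscernible equivalence classes on `A^n`
with infinitely many classes, such that moreover every element of `A` is definable
from these classes: the only automorphism of `A` fixing each class setwise is the
identity. -/
theorem aut_iso_Sinfty_iff (L : ℕ → ℕ) (A : Str L) :
    (∃ H : ↥(aut A) ≃* Equiv.Perm ℕ,
      Continuous fun g : ↥(aut A) => ((H g : Equiv.Perm ℕ) : ℕ → ℕ)) ↔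
    (∃ (n : ℕ) (D : Set (Fin n → ℕ)) (E : (Fin n → ℕ) → (Fin n → ℕ) → Prop),
      -- `D` is invariant under all automorphisms of `A`
      (∀ g : Equiv.Perm ℕ, IsIso A A g → ∀ v ∈ D, (fun k => g (v k)) ∈ D) ∧
      -- `E` is invariant under all automorphisms of `A`
      (∀ g : Equiv.Perm ℕ, IsIso A A g → ∀ v ∈ D, ∀ w ∈ D,
        E v w → E (fun k => g (v k)) (fun k => g (w k))) ∧
      -- `E` is an equivalence relation on `D`
      (∀ v ∈ D, E v v) ∧
      (∀ v ∈ D, ∀ w ∈ D, E v w → E w v) ∧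
      (∀ v ∈ D, ∀ w ∈ D, ∀ u ∈ D, E v w → E w u → E v u) ∧
      -- `E` has infinitely many equivalence classes
      (∃ r : ℕ → (Fin n → ℕ), (∀ k, r k ∈ D) ∧ ∀ k l : ℕ, k ≠ l → ¬E (r k) (r l)) ∧
      -- the `E`-classes are absolutely indiscernible
      (∀ π : (Fin n → ℕ) → (Fin n → ℕ),
        (∀ v ∈ D, π v ∈ D) →
        (∀ v ∈ D, ∀ w ∈ D, (E v w ↔ E (π v) (π w))) →
        (∀ w ∈ D, ∃ v ∈ D, E (π v) w) →
        ∃ g : Equiv.Perm ℕ, IsIso A A g ∧ ∀ v ∈ D, E (fun k => g (v k)) (π v)) ∧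
      -- every element is definable from the classes: the only automorphism fixing
      -- each `E`-class setwise is the identity
      (∀ g : Equiv.Perm ℕ, IsIso A A g →
        (∀ v ∈ D, E (fun k => g (v k)) v) → g = 1)) := by
  constructor
  · rintro ⟨H, hc⟩
    exact aut_forward L A H hc
  · rintro ⟨n, D, E, h1, h2, h3, h4, h5, h6, h7, h8⟩
    exact aut_backward L A n D E h1 h2 h3 h4 h5 h6 h7 h8

end Paper
end
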